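/- For every nonempty finite multisubset S ⊆ K, every integer ℓ ≥ 1 and every integer q ≥ 0, setting n = |Ŝ|^ℓ, 𝒮_ℓ := Ŝ^ℓ p₀ for a fixed p₀ ∈ M, and σ^M_ℓ the uniform empirical probability measure on 𝒮_ℓ, the following holds: (1/n) · d_Pr( Φ^{q,n}_{M, ∂_M, σ^M}, Φ^{q,n}_{𝒮_ℓ, ∂_M, σ^M_ℓ} ) ≤ W₁(σ^M, σ^M_ℓ)^{1/2}. -/

import Mathlib

open MeasureTheory Metric Real
open scoped ENNReal NNReal

/-- The group element corresponding to a word `w` of length `ℓ` in the alphabet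
`Ŝ = S ⊔ S⁻¹`, where the letters of `S` are given by `g : Fin k → K`. -/
def wordProd {K : Type*} [Group K] {k : ℕ} (g : Fin k → K) {ℓ : ℕ}
    (w : Fin ℓ → Fin k × Bool) : K :=
  (List.ofFn fun j => if (w j).2 then g (w j).1 else (g (w j).1)⁻¹).prod

/-- The 1-Wasserstein distance between two Borel measures, via
Kantorovich–Rubinstein duality: the supremum of `∫φ dμ − ∫φ dν` over 1-Lipschitz `φ`. -/
noncomputable def wasserstein1 {M : Type*} [MetricSpace M] [MeasurableSpace M]
    (μ ν : Measure M) : ℝ :=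
  ⨆ φ : {f : M → ℝ // LipschitzWith 1 f}, (∫ x, φ.1 x ∂μ - ∫ x, φ.1 x ∂ν)

/-- The uniform empirical probability measure on the multiset `Ŝ^ℓ p₀`, where the letters of
`S` are `g : Fin k → K`. -/
noncomputable def empiricalMeasure {K : Type*} [Group K] {M : Type*} [MeasurableSpace M]
    [MulAction K M] {k ℓ : ℕ} (g : Fin k → K) (p₀ : M) : Measure M :=
  (Fintype.card (Fin ℓ → Fin k × Bool) : ℝ≥0∞)⁻¹ •
    ∑ w : Fin ℓ → Fin k × Bool, Measure.dirac (wordProd g w • p₀)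

lemma my_integrable {X : Type*} [MeasurableSpace X] {μ : Measure X} [IsFiniteMeasure μ]
    {f : X → ℝ} (hf : Measurable f) {C : ℝ} (hC : ∀ x, |f x| ≤ C) : Integrable f μ :=
  ⟨hf.aestronglyMeasurable,
    HasFiniteIntegral.of_bounded (ae_of_all _ fun x => by simpa [Real.norm_eq_abs] using hC x)⟩

lemma le_wasserstein1 {M : Type*} [MetricSpace M] [CompactSpace M] [Nonempty M]
    [MeasurableSpace M] [BorelSpace M] (μ ν : Measure M)
    [IsProbabilityMeasure μ] [IsProbabilityMeasure ν]
    (φ : M → ℝ) (hφ : LipschitzWith 1 φ) :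
    ∫ x, φ x ∂μ - ∫ x, φ x ∂ν ≤ wasserstein1 μ ν := by
  have hbdd : BddAbove (Set.range fun ψ : {f : M → ℝ // LipschitzWith 1 f} =>
      ∫ x, ψ.1 x ∂μ - ∫ x, ψ.1 x ∂ν) := by
    refine ⟨2 * Metric.diam (Set.univ : Set M), ?_⟩
    rintro r ⟨ψ, rfl⟩
    have x₀ : M := Classical.arbitrary M
    have hb : ∀ x : M, ‖ψ.1 x - ψ.1 x₀‖ ≤ Metric.diam (Set.univ : Set M) := by
      intro x
      rw [Real.norm_eq_abs, ← Real.dist_eq]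
      calc dist (ψ.1 x) (ψ.1 x₀) ≤ 1 * dist x x₀ := ψ.2.dist_le_mul x x₀
        _ ≤ Metric.diam (Set.univ : Set M) := by
            rw [one_mul]
            exact dist_le_diam_of_mem isCompact_univ.isBounded trivial trivial
    have hψint : ∀ (ρ : Measure M) [IsProbabilityMeasure ρ], Integrable ψ.1 ρ := by
      intro ρ _
      refine my_integrable ψ.2.continuous.measurable (C := Metric.diam (Set.univ : Set M) + |ψ.1 x₀|) ?_
      intro x
      have := hb x
      rw [Real.norm_eq_abs] at this
      calc |ψ.1 x| = |ψ.1 x - ψ.1 x₀ + ψ.1 x₀| := by ring_nf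
        _ ≤ |ψ.1 x - ψ.1 x₀| + |ψ.1 x₀| := abs_add_le _ _
        _ ≤ _ := by linarith
    have key : ∀ (ρ : Measure M) [IsProbabilityMeasure ρ],
        |(∫ x, ψ.1 x ∂ρ) - ψ.1 x₀| ≤ Metric.diam (Set.univ : Set M) := by
      intro ρ _
      have hn := norm_integral_le_of_norm_le_const (μ := ρ)
        (f := fun x => ψ.1 x - ψ.1 x₀) (C := Metric.diam (Set.univ : Set M)) (ae_of_all _ hb)
      rw [integral_sub (hψint ρ) (integrable_const _), integral_const] at hn
      simpa [Real.norm_eq_abs, measure_univ] using hn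
    have h1 := key μ
    have h2 := key ν
    obtain ⟨h1a, h1b⟩ := abs_le.mp h1
    obtain ⟨h2a, h2b⟩ := abs_le.mp h2
    dsimp only
    linarith
  exact le_ciSup hbdd ⟨φ, hφ⟩

lemma swap_coord {M : Type*} [MeasurableSpace M] {m : ℕ}
    (μs νs : Fin (m+1) → Measure M) [hμp : ∀ j, IsProbabilityMeasure (μs j)]
    [hνp : ∀ j, IsProbabilityMeasure (νs j)]
    (i : Fin (m+1)) (hoff : ∀ j, j ≠ i → μs j = νs j)
    (F : (Fin (m+1) → M) → ℝ) (hFm : Measurable F) {C : ℝ} (hFb : ∀ v, |F v| ≤ C)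
    {D : ℝ}
    (hinner : ∀ rest : Fin m → M,
      ∫ x, F (i.insertNth x rest) ∂(μs i) - ∫ x, F (i.insertNth x rest) ∂(νs i) ≤ D) :
    ∫ v, F v ∂(Measure.pi μs) - ∫ v, F v ∂(Measure.pi νs) ≤ D := by
  set e := MeasurableEquiv.piFinSuccAbove (fun _ : Fin (m+1) => M) i with he
  have hrest : (fun j => νs (i.succAbove j)) = fun j => μs (i.succAbove j) :=
    funext fun j => (hoff _ (Fin.succAbove_ne i j)).symm
  set ρ := Measure.pi fun j => μs (i.succAbove j) with hρ
  set G : M × (Fin m → M) → ℝ := fun p => F (i.insertNth p.1 p.2) with hG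
  have hesymm : ∀ p : M × (Fin m → M), e.symm p = i.insertNth p.1 p.2 := fun p => rfl
  have hGm : Measurable G := by
    have : G = F ∘ e.symm := by funext p; simp [hG, hesymm]
    rw [this]; exact hFm.comp e.symm.measurable
  have hGb : ∀ p, |G p| ≤ C := fun p => hFb _
  have hμside : ∫ v, F v ∂(Measure.pi μs) = ∫ p, G p ∂((μs i).prod ρ) := by
    have h := (measurePreserving_piFinSuccAbove μs i).integral_comp' (g := G)
    rw [← h]
    congr 1
    funext v
    simp [hG, MeasurableEquiv.piFinSuccAbove]
    exact congrArg F ((Fin.insertNthEquiv (fun _ => M) i).apply_symm_apply v).symm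
  have hνside : ∫ v, F v ∂(Measure.pi νs) = ∫ p, G p ∂((νs i).prod ρ) := by
    have h := (measurePreserving_piFinSuccAbove νs i).integral_comp' (g := G)
    rw [hρ, ← hrest, ← h]
    congr 1
    funext v
    simp [hG, MeasurableEquiv.piFinSuccAbove]
    exact congrArg F ((Fin.insertNthEquiv (fun _ => M) i).apply_symm_apply v).symm
  have hGint : Integrable G ((μs i).prod ρ) := my_integrable hGm hGb
  have hGint' : Integrable G ((νs i).prod ρ) := my_integrable hGm hGb
  rw [hμside, hνside, integral_prod_symm _ hGint, integral_prod_symm _ hGint']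
  have hsub : ∫ rest, (∫ x, G (x, rest) ∂(μs i)) ∂ρ - ∫ rest, (∫ x, G (x, rest) ∂(νs i)) ∂ρ
      = ∫ rest, ((∫ x, G (x, rest) ∂(μs i)) - (∫ x, G (x, rest) ∂(νs i))) ∂ρ :=
    (integral_sub hGint.integral_prod_right hGint'.integral_prod_right).symm
  rw [hsub]
  calc ∫ rest, ((∫ x, G (x, rest) ∂(μs i)) - (∫ x, G (x, rest) ∂(νs i))) ∂ρ
      ≤ ∫ _rest, D ∂ρ := by
        refine integral_mono (hGint.integral_prod_right.sub hGint'.integral_prod_right)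
          (integrable_const _) ?_
        intro rest
        exact hinner rest
    _ = D := by simp [measure_univ]

lemma hybrid {M : Type*} [MeasurableSpace M] {m : ℕ} (μ ν : Measure M)
    [IsProbabilityMeasure μ] [IsProbabilityMeasure ν]
    (F : (Fin (m+1) → M) → ℝ) (hFm : Measurable F) {C : ℝ} (hFb : ∀ v, |F v| ≤ C) {D : ℝ}
    (hinner : ∀ (i : Fin (m+1)) (rest : Fin m → M),
      ∫ x, F (i.insertNth x rest) ∂μ - ∫ x, F (i.insertNth x rest) ∂ν ≤ D) :
    ∫ v, F v ∂(Measure.pi fun _ => μ) - ∫ v, F v ∂(Measure.pi fun _ => ν)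
      ≤ ((m : ℝ) + 1) * D := by
  set μs : ℕ → Fin (m+1) → Measure M := fun t j => if (j : ℕ) < t then ν else μ with hμs
  have hP : ∀ t, ∀ j : Fin (m+1), IsProbabilityMeasure (μs t j) := by
    intro t j; simp only [hμs]; split <;> infer_instance
  have h0 : μs 0 = fun _ => μ := funext fun j => by simp [hμs]
  have h1 : μs (m+1) = fun _ => ν := funext fun j => by simp [hμs, j.isLt]
  have key : ∀ t, t < m + 1 →
      ∫ v, F v ∂(Measure.pi (μs t)) - ∫ v, F v ∂(Measure.pi (μs (t+1))) ≤ D := by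
    intro t ht
    haveI := hP t
    haveI := hP (t+1)
    refine swap_coord (μs t) (μs (t+1)) ⟨t, ht⟩ ?_ F hFm hFb ?_
    · intro j hj
      have hjt : (j : ℕ) ≠ t := fun h => hj (Fin.ext h)
      simp only [hμs]
      by_cases h : (j : ℕ) < t
      · rw [if_pos h, if_pos (by omega)]
      · rw [if_neg h, if_neg (by omega)]
    · intro rest
      have e1 : μs t ⟨t, ht⟩ = μ := by simp [hμs]
      have e2 : μs (t+1) ⟨t, ht⟩ = ν := by simp [hμs]
      rw [e1, e2]
      exact hinner _ rest
  have tele : ∫ v, F v ∂(Measure.pi (μs 0)) - ∫ v, F v ∂(Measure.pi (μs (m+1)))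
      = ∑ t ∈ Finset.range (m+1),
        (∫ v, F v ∂(Measure.pi (μs t)) - ∫ v, F v ∂(Measure.pi (μs (t+1)))) :=
    (Finset.sum_range_sub' (fun t => ∫ v, F v ∂(Measure.pi (μs t))) (m+1)).symm
  rw [← h0, ← h1, tele]
  calc ∑ t ∈ Finset.range (m+1),
        (∫ v, F v ∂(Measure.pi (μs t)) - ∫ v, F v ∂(Measure.pi (μs (t+1))))
      ≤ ∑ _t ∈ Finset.range (m+1), D :=
        Finset.sum_le_sum fun t ht => key t (Finset.mem_range.mp ht)
    _ = ((m : ℝ) + 1) * D := by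
        rw [Finset.sum_const, Finset.card_range, nsmul_eq_mul]
        push_cast
        ring

lemma main_bound {M : Type*} {B : Type*} [MetricSpace M] [MeasurableSpace M] [BorelSpace M]
    [MetricSpace B] [MeasurableSpace B] [BorelSpace B]
    {m : ℕ} (μ ν : Measure M) [IsProbabilityMeasure μ] [IsProbabilityMeasure ν]
    (PH : (Fin (m+1) → M) → B) (hPHm : Measurable PH)
    (hstab : ∀ v w, dist (PH v) (PH w) ≤ 2 * ⨆ j, dist (v j) (w j))
    {W : ℝ} (hW0 : 0 ≤ W)
    (hdual : ∀ φ : M → ℝ, LipschitzWith 1 φ → ∫ x, φ x ∂μ - ∫ x, φ x ∂ν ≤ W)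
    {e : ℝ} (he : 0 < e) (hee : 2 * ((m : ℝ) + 1) * W ≤ e ^ 2)
    {A : Set B} (hA : MeasurableSet A) :
    (Measure.map PH (Measure.pi fun _ : Fin (m+1) => μ)) A
      ≤ (Measure.map PH (Measure.pi fun _ : Fin (m+1) => ν)) (thickening e A)
        + ENNReal.ofReal e := by
  rcases A.eq_empty_or_nonempty with rfl | hAne
  · simp
  rw [Measure.map_apply hPHm hA, Measure.map_apply hPHm isOpen_thickening.measurableSet]
  set πμ := Measure.pi fun _ : Fin (m+1) => μ with hπμ
  set πν := Measure.pi fun _ : Fin (m+1) => ν with hπν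
  set F : (Fin (m+1) → M) → ℝ := fun v => max (e - infDist (PH v) A) 0 with hF
  have hFm : Measurable F :=
    ((measurable_const.sub ((continuous_infDist_pt A).measurable.comp hPHm)).max
      measurable_const)
  have hF0 : ∀ v, 0 ≤ F v := fun v => le_max_right _ _
  have hFle : ∀ v, F v ≤ e := fun v =>
    max_le (by linarith [infDist_nonneg (x := PH v) (s := A)]) he.le
  have hFb : ∀ v, |F v| ≤ e := fun v => abs_le.mpr ⟨by linarith [hF0 v], hFle v⟩
  have hμint : Integrable F πμ := my_integrable hFm hFb
  have hνint : Integrable F πν := my_integrable hFm hFb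
  -- coordinatewise Lipschitz property
  have hFlip : ∀ (i : Fin (m+1)) (rest : Fin m → M) (x y : M),
      |F (i.insertNth x rest) - F (i.insertNth y rest)| ≤ 2 * dist x y := by
    intro i rest x y
    set v₁ : Fin (m+1) → M := i.insertNth x rest
    set v₂ : Fin (m+1) → M := i.insertNth y rest
    set a := infDist (PH v₁) A with ha
    set b := infDist (PH v₂) A with hb
    have h1 : |F v₁ - F v₂| ≤ |a - b| := by
      have h := abs_max_sub_max_le_abs (e - a) (e - b) 0
      have h' : |e - a - (e - b)| = |a - b| := by
        rw [show e - a - (e - b) = -(a - b) by ring, abs_neg]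
      rw [h'] at h
      exact h
    have h2 : |a - b| ≤ dist (PH v₁) (PH v₂) := by
      rw [abs_sub_le_iff]
      constructor
      · have := infDist_le_infDist_add_dist (x := PH v₁) (y := PH v₂) (s := A)
        linarith
      · have := infDist_le_infDist_add_dist (x := PH v₂) (y := PH v₁) (s := A)
        rw [dist_comm (PH v₂) (PH v₁)] at this
        linarith
    have h3 := hstab v₁ v₂
    have h4 : (⨆ j, dist (v₁ j) (v₂ j)) ≤ dist x y := by
      refine ciSup_le fun j => ?_
      rcases eq_or_ne j i with rfl | hj
      · simp [v₁, v₂, Fin.insertNth_apply_same]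
      · obtain ⟨j', rfl⟩ := Fin.exists_succAbove_eq hj
        have e1 : v₁ (i.succAbove j') = rest j' := by simp [v₁]
        have e2 : v₂ (i.succAbove j') = rest j' := by simp [v₂]
        rw [e1, e2, dist_self]
        exact dist_nonneg
    linarith
  -- the inner Wasserstein bound
  have hinner : ∀ (i : Fin (m+1)) (rest : Fin m → M),
      ∫ x, F (i.insertNth x rest) ∂μ - ∫ x, F (i.insertNth x rest) ∂ν ≤ 2 * W := by
    intro i rest
    set φ : M → ℝ := fun x => F (i.insertNth x rest) with hφ
    have hlip : LipschitzWith 1 (fun x => 2⁻¹ * φ x) := by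
      refine LipschitzWith.of_dist_le_mul fun x y => ?_
      have h := hFlip i rest x y
      have habs : dist (2⁻¹ * φ x) (2⁻¹ * φ y) = 2⁻¹ * |φ x - φ y| := by
        rw [Real.dist_eq, ← mul_sub, abs_mul]
        norm_num
      rw [habs, NNReal.coe_one, one_mul]
      rw [hφ]
      linarith
    have hd := hdual _ hlip
    rw [integral_const_mul, integral_const_mul] at hd
    linarith
  have hyb : ∫ v, F v ∂πμ - ∫ v, F v ∂πν ≤ ((m : ℝ) + 1) * (2 * W) :=
    hybrid μ ν F hFm hFb hinner
  -- lower bound for μ-side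
  have hmeasA : MeasurableSet (PH ⁻¹' A) := hPHm hA
  have hmeasT : MeasurableSet (PH ⁻¹' thickening e A) := hPHm isOpen_thickening.measurableSet
  have hlow : e * (πμ (PH ⁻¹' A)).toReal ≤ ∫ v, F v ∂πμ := by
    have hind : ∀ v, (PH ⁻¹' A).indicator (fun _ => e) v ≤ F v := by
      intro v
      by_cases hv : v ∈ PH ⁻¹' A
      · rw [Set.indicator_of_mem hv]
        have h0' : infDist (PH v) A = 0 := infDist_zero_of_mem hv
        rw [hF]
        simp [h0', he.le]
      · rw [Set.indicator_of_notMem hv]; exact hF0 v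
    have h := integral_mono ((integrable_const e).indicator hmeasA) hμint hind
    rwa [integral_indicator_const e hmeasA, smul_eq_mul, mul_comm] at h
  -- upper bound for ν-side
  have hup : ∫ v, F v ∂πν ≤ e * (πν (PH ⁻¹' thickening e A)).toReal := by
    have hind : ∀ v, F v ≤ (PH ⁻¹' thickening e A).indicator (fun _ => e) v := by
      intro v
      by_cases hv : v ∈ PH ⁻¹' thickening e A
      · rw [Set.indicator_of_mem hv]; exact hFle v
      · rw [Set.indicator_of_notMem hv]
        have hlt : ¬ infDist (PH v) A < e := fun h =>
          hv ((mem_thickening_iff_infDist_lt hAne).mpr h)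
        rw [hF]
        simp only
        rw [max_eq_right (by linarith [not_lt.mp hlt])]
    have h := integral_mono hνint ((integrable_const e).indicator hmeasT) hind
    rwa [integral_indicator_const e hmeasT, smul_eq_mul, mul_comm] at h
  -- combine
  have hreal : (πμ (PH ⁻¹' A)).toReal ≤ (πν (PH ⁻¹' thickening e A)).toReal + e := by
    have h1 : e * (πμ (PH ⁻¹' A)).toReal
        ≤ e * ((πν (PH ⁻¹' thickening e A)).toReal + e) := by nlinarith
    exact le_of_mul_le_mul_left h1 he
  calc πμ (PH ⁻¹' A) = ENNReal.ofReal ((πμ (PH ⁻¹' A)).toReal) :=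
        (ENNReal.ofReal_toReal (measure_ne_top _ _)).symm
    _ ≤ ENNReal.ofReal ((πν (PH ⁻¹' thickening e A)).toReal + e) :=
        ENNReal.ofReal_le_ofReal hreal
    _ = ENNReal.ofReal ((πν (PH ⁻¹' thickening e A)).toReal) + ENNReal.ofReal e :=
        ENNReal.ofReal_add ENNReal.toReal_nonneg he.le
    _ = πν (PH ⁻¹' thickening e A) + ENNReal.ofReal e := by
        rw [ENNReal.ofReal_toReal (measure_ne_top _ _)]

/-- **Prokhorov stability of persistent-homology pushforwards** (Theorem `persistent1`).
`M = K/H` is a compact connected Riemannian symmetric space with `K`-invariant probability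
measure `σM`, and `B` is the barcode space with the bottleneck distance; `PH q` sends an
`n`-tuple of points of `M` to the `q`-th persistent homology barcode of its Vietoris–Rips
filtration (it is measurable and satisfies the Chazal et al. stability bound).  For every
nonempty finite multiset `S ⊆ K` of isometries, every `ℓ ≥ 1` and every `q ≥ 0`, with
`n = |Ŝ|^ℓ = (2k)^ℓ`, `𝒮_ℓ := Ŝ^ℓ p₀` and `σ^M_ℓ` the empirical measure on `𝒮_ℓ`:
`(1/n) · d_Pr(Φ^{q,n}_{M,∂_M,σ^M}, Φ^{q,n}_{𝒮_ℓ,∂_M,σ^M_ℓ}) ≤ W₁(σ^M, σ^M_ℓ)^{1/2}`. -/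
theorem prokhorov_persistent_homology_bound
    {K : Type*} [Group K] [TopologicalSpace K] [IsTopologicalGroup K] [CompactSpace K]
    [MeasurableSpace K] [BorelSpace K]
    {M : Type*} [MetricSpace M] [CompactSpace M] [Nonempty M]
    [MeasurableSpace M] [BorelSpace M]
    [MulAction K M] [ContinuousSMul K M]
    (hIso : ∀ s : K, Isometry fun x : M => s • x)
    (hTrans : ∀ x y : M, ∃ s : K, s • x = y)
    (σM : Measure M) [IsProbabilityMeasure σM]
    (hInvMeas : ∀ s : K, MeasurePreserving (fun x : M => s • x) σM σM)
    -- the barcode space `ℬ`, metrized by the bottleneck distance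
    {B : Type*} [MetricSpace B] [MeasurableSpace B] [BorelSpace B]
    -- a nonempty finite multiset `S ⊆ K` and the word length `ℓ ≥ 1`
    (k : ℕ) (hk : 1 ≤ k) (g : Fin k → K) (ℓ : ℕ) (hℓ : 1 ≤ ℓ) (p₀ : M)
    (n : ℕ) (hn : n = (2 * k) ^ ℓ)
    -- the `q`-th persistent homology map on `n`-tuples of points of `M`,
    (PH : ℕ → (Fin n → M) → B)
    (hPHmeas : ∀ q, Measurable (PH q))
    -- satisfying the stability theorem of Chazal et al. for Vietoris–Rips barcodes
    (hPHstab : ∀ q, ∀ v w : Fin n → M,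
      dist (PH q v) (PH q w) ≤ 2 * ⨆ j, dist (v j) (w j)) :
    ∀ q : ℕ,
      (1 / (n : ℝ)) *
        levyProkhorovDist
          (Measure.map (PH q) (Measure.pi fun _ : Fin n => σM))
          (Measure.map (PH q) (Measure.pi fun _ : Fin n => empiricalMeasure (ℓ := ℓ) g p₀))
        ≤ Real.sqrt (wasserstein1 σM (empiricalMeasure (ℓ := ℓ) g p₀)) := by
  intro q
  classical
  set ν := empiricalMeasure (ℓ := ℓ) g p₀ with hνdef
  haveI : Nonempty (Fin k) := ⟨⟨0, by omega⟩⟩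
  haveI hνP : IsProbabilityMeasure ν := by
    constructor
    rw [hνdef]
    rw [empiricalMeasure]
    rw [Measure.smul_apply, Measure.finset_sum_apply]
    simp only [measure_univ]
    rw [Finset.sum_const, Finset.card_univ, nsmul_eq_mul, mul_one, smul_eq_mul]
    exact ENNReal.inv_mul_cancel (Nat.cast_ne_zero.mpr Fintype.card_ne_zero)
      (ENNReal.natCast_ne_top _)
  have hn2 : 2 ≤ n := by
    rw [hn]
    calc 2 = 2^1 := rfl
      _ ≤ (2*k)^1 := Nat.pow_le_pow_left (by omega) 1
      _ ≤ (2*k)^ℓ := Nat.pow_le_pow_right (by omega) hℓ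
  set W := wasserstein1 σM ν with hWdef
  have hdualμν : ∀ φ : M → ℝ, LipschitzWith 1 φ → ∫ x, φ x ∂σM - ∫ x, φ x ∂ν ≤ W :=
    fun φ hφ => le_wasserstein1 σM ν φ hφ
  have hdualνμ : ∀ φ : M → ℝ, LipschitzWith 1 φ → ∫ x, φ x ∂ν - ∫ x, φ x ∂σM ≤ W := by
    intro φ hφ
    have hneg : LipschitzWith 1 (fun x => -φ x) := by
      refine LipschitzWith.of_dist_le_mul fun x y => ?_
      rw [dist_neg_neg]
      exact hφ.dist_le_mul x y
    have h := hdualμν _ hneg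
    rw [integral_neg, integral_neg] at h
    linarith
  have hW0 : 0 ≤ W := by
    have h := hdualμν (fun _ => 0) ((LipschitzWith.const (0:ℝ)).weaken zero_le_one)
    simpa using h
  obtain ⟨m, rfl⟩ : ∃ m, n = m + 1 := ⟨n - 1, by omega⟩
  have hm2 : (2:ℝ) ≤ (m:ℝ) + 1 := by exact_mod_cast hn2
  set t := ((m:ℝ) + 1) * Real.sqrt W with htdef
  have ht0 : 0 ≤ t := mul_nonneg (by positivity) (Real.sqrt_nonneg _)
  have hedist : levyProkhorovEDist
      (Measure.map (PH q) (Measure.pi fun _ : Fin (m+1) => σM))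
      (Measure.map (PH q) (Measure.pi fun _ : Fin (m+1) => ν)) ≤ ENNReal.ofReal t := by
    apply levyProkhorovEDist_le_of_forall
    intro ε Bs hδε hεtop hBmeas
    have hte : t < ε.toReal := by
      have h := (ENNReal.toReal_lt_toReal ENNReal.ofReal_ne_top hεtop.ne).mpr hδε
      rwa [ENNReal.toReal_ofReal ht0] at h
    have he0 : 0 < ε.toReal := lt_of_le_of_lt ht0 hte
    have hee : 2 * ((m:ℝ) + 1) * W ≤ ε.toReal ^ 2 := by
      have h1 : t^2 ≤ ε.toReal^2 := by nlinarith
      have h2 : t^2 = ((m:ℝ)+1)^2 * W := by rw [htdef, mul_pow, Real.sq_sqrt hW0]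
      nlinarith [Real.sqrt_nonneg W]
    have hεe : ENNReal.ofReal ε.toReal = ε := ENNReal.ofReal_toReal hεtop.ne
    refine ⟨?_, ?_⟩
    · have h := main_bound σM ν (PH q) (hPHmeas q) (hPHstab q) hW0 hdualμν he0 hee hBmeas
      rwa [hεe] at h
    · have h := main_bound ν σM (PH q) (hPHmeas q) (hPHstab q) hW0 hdualνμ he0 hee hBmeas
      rwa [hεe] at h
  have hdist : levyProkhorovDist
      (Measure.map (PH q) (Measure.pi fun _ : Fin (m+1) => σM))
      (Measure.map (PH q) (Measure.pi fun _ : Fin (m+1) => ν)) ≤ t := by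
    rw [levyProkhorovDist]
    exact ENNReal.toReal_le_of_le_ofReal ht0 hedist
  refine le_trans (mul_le_mul_of_nonneg_left hdist (by positivity)) (le_of_eq ?_)
  rw [htdef]
  have hne : ((m:ℝ) + 1) ≠ 0 := by positivity
  push_cast
  field_simp
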